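/- arXiv:2409.04297 — 2 statements merged into one kernel-verified Lean document; each statement's English description precedes it below -/
import Mathlib

section
/- Conversely to the low-dimensionality theorem: if α_ε^V(P) = α_ε(P) and both suprema are attained, then the subspace V contains a vector proportional to a right singular vector corresponding to σ_min(P(z̄)) for some point z̄ ∈ Λ_ε(P) with Re(z̄) = α_ε(P). -/
open Matrix Complex

/-- Euclidean norm of a complex vector. -/
noncomputable def vnorm {ι : Type*} [Fintype ι] (v : ι → ℂ) : ℝ :=
  Real.sqrt (∑ i, ‖v i‖ ^ 2)

/-- Smallest singular value of a (possibly rectangular) complex matrix: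
the infimum of `‖A v‖` over unit vectors `v`. -/
noncomputable def sigmaMin {ι κ : Type*} [Fintype ι] [Fintype κ]
    (A : Matrix ι κ ℂ) : ℝ :=
  sInf {t : ℝ | ∃ v : κ → ℂ, vnorm v = 1 ∧ t = vnorm (A.mulVec v)}

/-- Spectral (operator 2-) norm of a complex matrix. -/
noncomputable def specNorm {ι κ : Type*} [Fintype ι] [Fintype κ]
    (A : Matrix ι κ ℂ) : ℝ :=
  sSup {t : ℝ | ∃ v : κ → ℂ, vnorm v = 1 ∧ t = vnorm (A.mulVec v)}

/-- The weight/scaling function `p_w(z) = √(w_m² z⁴ + w_c² z² + w_k²)`. -/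
noncomputable def pw (wm wc wk z : ℝ) : ℝ :=
  Real.sqrt (wm ^ 2 * z ^ 4 + wc ^ 2 * z ^ 2 + wk ^ 2)

/-- The quadratic matrix polynomial `P(z) = z² M + z C + K`. -/
noncomputable def Ppoly {n : ℕ} (M C K : Matrix (Fin n) (Fin n) ℂ) (z : ℂ) :
    Matrix (Fin n) (Fin n) ℂ :=
  z ^ 2 • M + z • C + K

/-- The column span (range) of a matrix, viewed as a subspace of `ℂⁿ`. -/
noncomputable def colSpan {n r : ℕ} (A : Matrix (Fin n) (Fin r) ℂ) : Submodule ℂ (Fin n → ℂ) :=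
  Submodule.span ℂ (Set.range fun j => fun i => A i j)

/-- The ε-pseudospectrum of the quadratic matrix polynomial `P(λ)=λ²M+λC+K`
(singular value characterization). -/
noncomputable def Lam {n : ℕ} (M C K : Matrix (Fin n) (Fin n) ℂ)
    (ε wm wc wk : ℝ) : Set ℂ :=
  {z : ℂ | sigmaMin (Ppoly M C K z) ≤ ε * pw wm wc wk ‖z‖}

/-- The restricted ε-pseudospectrum determined by the basis matrix `Vm`. -/
noncomputable def LamRes {n r : ℕ} (M C K : Matrix (Fin n) (Fin n) ℂ)
    (Vm : Matrix (Fin n) (Fin r) ℂ) (ε wm wc wk : ℝ) : Set ℂ :=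
  {z : ℂ | sigmaMin (Ppoly M C K z * Vm) ≤ ε * pw wm wc wk ‖z‖}

section Helpers

variable {ι κ : Type*} [Fintype ι] [Fintype κ]

lemma vnorm_nonneg (v : ι → ℂ) : 0 ≤ vnorm v := Real.sqrt_nonneg _

lemma vnorm_eq_norm (v : ι → ℂ) : vnorm v = ‖(WithLp.equiv 2 (ι → ℂ)).symm v‖ := by
  rw [EuclideanSpace.norm_eq]; simp [vnorm]

lemma vnorm_add_le (x y : ι → ℂ) : vnorm (x + y) ≤ vnorm x + vnorm y := by
  simp only [vnorm_eq_norm]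
  exact norm_add_le ((WithLp.equiv 2 (ι → ℂ)).symm x) ((WithLp.equiv 2 (ι → ℂ)).symm y)

lemma continuous_vnorm : Continuous (vnorm (ι := ι)) :=
  Real.continuous_sqrt.comp (continuous_finset_sum _ fun i _ =>
    (continuous_norm.comp (continuous_apply i)).pow 2)

lemma abs_le_vnorm (v : ι → ℂ) (i : ι) : ‖v i‖ ≤ vnorm v := by
  rw [show ‖v i‖ = Real.sqrt (‖v i‖ ^ 2) by
    rw [Real.sqrt_sq (norm_nonneg _)]]
  exact Real.sqrt_le_sqrt (Finset.single_le_sum (f := fun j => ‖v j‖ ^ 2)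
    (fun j _ => sq_nonneg _) (Finset.mem_univ i))

lemma continuous_mulVec' (A : Matrix ι κ ℂ) : Continuous fun v : κ → ℂ => A.mulVec v :=
  continuous_pi fun _ => continuous_finset_sum _ fun j _ =>
    continuous_const.mul (continuous_apply j)

lemma sigmaMin_bddBelow (A : Matrix ι κ ℂ) :
    BddBelow {t : ℝ | ∃ v : κ → ℂ, vnorm v = 1 ∧ t = vnorm (A.mulVec v)} :=
  ⟨0, by rintro t ⟨v, -, rfl⟩; exact vnorm_nonneg _⟩

lemma sigmaMin_le (A : Matrix ι κ ℂ) {v : κ → ℂ} (hv : vnorm v = 1) :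
    sigmaMin A ≤ vnorm (A.mulVec v) :=
  csInf_le (sigmaMin_bddBelow A) ⟨v, hv, rfl⟩

lemma sigmaMin_exists_min [Nonempty κ] (A : Matrix ι κ ℂ) :
    ∃ w : κ → ℂ, vnorm w = 1 ∧ vnorm (A.mulVec w) = sigmaMin A := by
  classical
  set S : Set (κ → ℂ) := {v | vnorm v = 1} with hS
  have hSne : S.Nonempty := by
    refine ⟨Pi.single (Classical.arbitrary κ) 1, ?_⟩
    simp [hS, vnorm, Pi.single_apply, apply_ite (‖·‖), Finset.sum_ite_eq']
  have hScl : IsClosed S := isClosed_eq continuous_vnorm continuous_const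
  have hSbd : Bornology.IsBounded S := by
    rw [Metric.isBounded_iff_subset_closedBall 0]
    refine ⟨1, fun v hv => ?_⟩
    rw [Metric.mem_closedBall, dist_zero_right, pi_norm_le_iff_of_nonneg zero_le_one]
    intro i
    calc ‖v i‖ = ‖v i‖ := rfl
      _ ≤ vnorm v := abs_le_vnorm v i
      _ = 1 := hv
  have hcpt : IsCompact S := Metric.isCompact_of_isClosed_isBounded hScl hSbd
  have hf : Continuous fun v : κ → ℂ => vnorm (A.mulVec v) :=
    continuous_vnorm.comp (continuous_mulVec' A)
  obtain ⟨w, hwS, hmin⟩ := hcpt.exists_isMinOn hSne hf.continuousOn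
  refine ⟨w, hwS, le_antisymm ?_ (sigmaMin_le A hwS)⟩
  refine le_csInf ⟨_, w, hwS, rfl⟩ ?_
  rintro t ⟨v, hv, rfl⟩
  exact hmin hv

lemma dot_star_self (y : ι → ℂ) :
    star y ⬝ᵥ y = ((∑ i, ‖y i‖ ^ 2 : ℝ) : ℂ) := by
  simp only [dotProduct, Pi.star_apply, RCLike.star_def]
  push_cast
  refine Finset.sum_congr rfl fun i _ => ?_
  rw [mul_comm, Complex.mul_conj, ← Complex.sq_norm]
  push_cast
  ring

lemma vnorm_mulVec_isometry {n r : ℕ} (Vm : Matrix (Fin n) (Fin r) ℂ)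
    (hVm : Vmᴴ * Vm = 1) (u : Fin r → ℂ) : vnorm (Vm.mulVec u) = vnorm u := by
  unfold vnorm
  congr 1
  have h : star (Vm.mulVec u) ⬝ᵥ Vm.mulVec u = star u ⬝ᵥ u := by
    rw [Matrix.star_mulVec, Matrix.dotProduct_mulVec, Matrix.vecMul_vecMul, hVm,
      Matrix.vecMul_one]
  rw [dot_star_self, dot_star_self] at h
  exact_mod_cast h

/-- A crude "Frobenius-like" norm bound used only for continuity estimates. -/
noncomputable def fro (A : Matrix ι κ ℂ) : ℝ :=
  Real.sqrt (∑ i, (∑ j, ‖A i j‖) ^ 2)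

lemma vnorm_mulVec_le (A : Matrix ι κ ℂ) (v : κ → ℂ) :
    vnorm (A.mulVec v) ≤ fro A * vnorm v := by
  have key : ∀ i, ‖A.mulVec v i‖ ≤ (∑ j, ‖A i j‖) * vnorm v := by
    intro i
    calc ‖A.mulVec v i‖ = ‖∑ j, A i j * v j‖ := rfl
      _ ≤ ∑ j, ‖A i j * v j‖ := norm_sum_le _ _
      _ = ∑ j, ‖A i j‖ * ‖v j‖ := by simp [_root_.map_mul]
      _ ≤ ∑ j, ‖A i j‖ * vnorm v :=
          Finset.sum_le_sum fun j _ => mul_le_mul_of_nonneg_left (abs_le_vnorm v j)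
            (norm_nonneg _)
      _ = (∑ j, ‖A i j‖) * vnorm v := by rw [Finset.sum_mul]
  calc vnorm (A.mulVec v) = Real.sqrt (∑ i, ‖A.mulVec v i‖ ^ 2) := rfl
    _ ≤ Real.sqrt (∑ i, ((∑ j, ‖A i j‖) * vnorm v) ^ 2) :=
        Real.sqrt_le_sqrt (Finset.sum_le_sum fun i _ =>
          pow_le_pow_left₀ (norm_nonneg _) (key i) 2)
    _ = Real.sqrt ((∑ i, (∑ j, ‖A i j‖) ^ 2) * vnorm v ^ 2) := by
        simp only [mul_pow, ← Finset.sum_mul]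
    _ = fro A * vnorm v := by
        rw [Real.sqrt_mul (Finset.sum_nonneg fun i _ => sq_nonneg _),
          Real.sqrt_sq (vnorm_nonneg v)]
        rfl

lemma continuous_fro {X : Type*} [TopologicalSpace X] (f : X → Matrix ι κ ℂ)
    (hf : ∀ i j, Continuous fun x => f x i j) : Continuous fun x => fro (f x) :=
  Real.continuous_sqrt.comp (continuous_finset_sum _ fun i _ =>
    (continuous_finset_sum _ fun j _ => continuous_norm.comp (hf i j)).pow 2)

lemma sigmaMin_perturb [Nonempty κ] (A B : Matrix ι κ ℂ) :
    sigmaMin A ≤ sigmaMin B + fro (A - B) := by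
  obtain ⟨w, hw1, hwB⟩ := sigmaMin_exists_min B
  calc sigmaMin A ≤ vnorm (A.mulVec w) := sigmaMin_le A hw1
    _ = vnorm (B.mulVec w + (A - B).mulVec w) := by
        have hAB : B + (A - B) = A := by abel
        rw [← Matrix.add_mulVec, hAB]
    _ ≤ vnorm (B.mulVec w) + vnorm ((A - B).mulVec w) := vnorm_add_le _ _
    _ ≤ sigmaMin B + fro (A - B) * vnorm w :=
        add_le_add hwB.le (vnorm_mulVec_le _ _)
    _ = sigmaMin B + fro (A - B) := by rw [hw1, mul_one]

end Helpers

/-- converse of low dimensionality: if `α_ε^V(P) = α_ε(P)` and both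
suprema are attained, then the subspace spanned by the orthonormal columns of `Vm`
contains a (nonzero) vector proportional to a right singular vector corresponding to
`σ_min(P(z̄))` for some `z̄ ∈ Λ_ε(P)` with `Re z̄ = α_ε(P)`. -/
theorem low_dimensionality_converse
    {n r : ℕ} (hr : 0 < r)
    (M C K : Matrix (Fin n) (Fin n) ℂ)
    (ε wm wc wk : ℝ) (hε : 0 < ε) (hwm : 0 ≤ wm) (hwc : 0 ≤ wc) (hwk : 0 ≤ wk)
    (Vm : Matrix (Fin n) (Fin r) ℂ) (hVm : Vmᴴ * Vm = 1)
    (hbd : Bornology.IsBounded (Lam M C K ε wm wc wk))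
    (hne : (Lam M C K ε wm wc wk).Nonempty)
    (heq : sSup (Complex.re '' LamRes M C K Vm ε wm wc wk) =
      sSup (Complex.re '' Lam M C K ε wm wc wk))
    (zV : ℂ) (hzV : zV ∈ LamRes M C K Vm ε wm wc wk)
    (hzVmax : zV.re = sSup (Complex.re '' LamRes M C K Vm ε wm wc wk))
    (zF : ℂ) (hzF : zF ∈ Lam M C K ε wm wc wk)
    (hzFmax : zF.re = sSup (Complex.re '' Lam M C K ε wm wc wk)) :
    ∃ zb ∈ Lam M C K ε wm wc wk,
      zb.re = sSup (Complex.re '' Lam M C K ε wm wc wk) ∧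
      ∃ v ∈ colSpan Vm, v ≠ 0 ∧
        ∃ (w : Fin n → ℂ) (c : ℂ), vnorm w = 1 ∧
          vnorm ((Ppoly M C K zb).mulVec w) = sigmaMin (Ppoly M C K zb) ∧
          v = c • w := by
  classical
  haveI : Nonempty (Fin r) := ⟨⟨0, hr⟩⟩
  obtain ⟨Cb, hCb⟩ := hbd.exists_norm_le
  -- n must be positive (otherwise Λ is all of ℂ, contradicting boundedness)
  have hn : 0 < n := by
    by_contra h
    push_neg at h
    have hn0 : n = 0 := Nat.le_zero.mp h
    subst hn0
    have hall : ∀ z : ℂ, z ∈ Lam M C K ε wm wc wk := by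
      intro z
      have : sigmaMin (Ppoly M C K z) = 0 := by
        have : {t : ℝ | ∃ v : Fin 0 → ℂ, vnorm v = 1 ∧
            t = vnorm ((Ppoly M C K z).mulVec v)} = ∅ := by
          ext t
          simp only [Set.mem_setOf_eq, Set.mem_empty_iff_false, iff_false]
          rintro ⟨v, hv, -⟩
          simp [vnorm] at hv
        rw [sigmaMin, this, Real.sInf_empty]
      show sigmaMin (Ppoly M C K z) ≤ ε * pw wm wc wk (‖z‖)
      rw [this]
      exact mul_nonneg hε.le (Real.sqrt_nonneg _)
    have h1 := hCb ((|Cb| + 1 : ℝ) : ℂ) (hall _)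
    rw [Complex.norm_real] at h1
    have h2 : (0 : ℝ) ≤ |Cb| + 1 := by positivity
    rw [Real.norm_eq_abs, _root_.abs_of_nonneg h2] at h1
    have := le_abs_self Cb
    linarith
  haveI : Nonempty (Fin n) := ⟨⟨0, hn⟩⟩
  have hbdd : BddAbove (Complex.re '' Lam M C K ε wm wc wk) := by
    refine ⟨Cb, ?_⟩
    rintro t ⟨z, hz, rfl⟩
    calc z.re ≤ ‖z‖ := Complex.re_le_norm z
      _ = ‖z‖ := rfl
      _ ≤ Cb := hCb z hz
  -- zV is in the full pseudospectrum
  have hsig_le : sigmaMin (Ppoly M C K zV) ≤ sigmaMin (Ppoly M C K zV * Vm) := by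
    obtain ⟨u, hu1, humin⟩ := sigmaMin_exists_min (Ppoly M C K zV * Vm)
    rw [← humin, ← Matrix.mulVec_mulVec]
    exact sigmaMin_le _ (by rw [vnorm_mulVec_isometry Vm hVm u, hu1])
  have hzVLam : zV ∈ Lam M C K ε wm wc wk := le_trans hsig_le hzV
  have hzVre : zV.re = sSup (Complex.re '' Lam M C K ε wm wc wk) := hzVmax.trans heq
  -- at zV the inequality is an equality
  have hkey : sigmaMin (Ppoly M C K zV) = ε * pw wm wc wk (‖zV‖) := by
    refine le_antisymm hzVLam ?_
    by_contra hlt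
    push_neg at hlt
    set g : ℝ → ℝ := fun t => sigmaMin (Ppoly M C K zV)
      + fro (Ppoly M C K (zV + t) - Ppoly M C K zV)
      - ε * pw wm wc wk (‖zV + t‖) with hg
    have hgc : Continuous g := by
      refine (continuous_const.add (continuous_fro _ ?_)).sub (continuous_const.mul ?_)
      · intro i j
        simp only [Ppoly, Matrix.sub_apply, Matrix.add_apply, Matrix.smul_apply,
          smul_eq_mul]
        have : Continuous fun t : ℝ => ((zV + (t : ℂ)) : ℂ) :=
          continuous_const.add Complex.continuous_ofReal
        fun_prop
      · unfold pw
        have habs : Continuous fun t : ℝ => ‖zV + (t : ℂ)‖ :=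
          continuous_norm.comp (continuous_const.add Complex.continuous_ofReal)
        fun_prop
    have hg0 : g 0 < 0 := by
      have : Ppoly M C K (zV + ((0 : ℝ) : ℂ)) - Ppoly M C K zV = 0 := by
        norm_num
      rw [hg]
      simp only [this]
      have hfro0 : fro (0 : Matrix (Fin n) (Fin n) ℂ) = 0 := by
        simp [fro]
      rw [hfro0]
      simpa using hlt
    have hopen : IsOpen {t : ℝ | g t < 0} := isOpen_lt hgc continuous_const
    obtain ⟨δ, hδpos, hδ⟩ := Metric.isOpen_iff.mp hopen 0 hg0
    have htmem : (δ / 2 : ℝ) ∈ {t : ℝ | g t < 0} := by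
      apply hδ
      rw [Metric.mem_ball, dist_zero_right, Real.norm_eq_abs,
        _root_.abs_of_nonneg (by positivity)]
      linarith
    have hgt : g (δ / 2) < 0 := htmem
    have hpert := sigmaMin_perturb (Ppoly M C K (zV + ((δ / 2 : ℝ) : ℂ))) (Ppoly M C K zV)
    have hmem : (zV + ((δ / 2 : ℝ) : ℂ)) ∈ Lam M C K ε wm wc wk := by
      show sigmaMin (Ppoly M C K (zV + ((δ / 2 : ℝ) : ℂ)))
        ≤ ε * pw wm wc wk (‖zV + ((δ / 2 : ℝ) : ℂ)‖)
      rw [hg] at hgt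
      simp only at hgt
      linarith
    have hle : (zV + ((δ / 2 : ℝ) : ℂ)).re ≤ sSup (Complex.re '' Lam M C K ε wm wc wk) :=
      le_csSup hbdd ⟨_, hmem, rfl⟩
    rw [Complex.add_re, Complex.ofReal_re, hzVre] at hle
    linarith
  -- restricted singular value equals full singular value at zV
  have hsig_eq : sigmaMin (Ppoly M C K zV * Vm) = sigmaMin (Ppoly M C K zV) := by
    refine le_antisymm ?_ hsig_le
    calc sigmaMin (Ppoly M C K zV * Vm) ≤ ε * pw wm wc wk (‖zV‖) := hzV
      _ = sigmaMin (Ppoly M C K zV) := hkey.symm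
  obtain ⟨u, hu1, humin⟩ := sigmaMin_exists_min (Ppoly M C K zV * Vm)
  set w : Fin n → ℂ := Vm.mulVec u with hw
  have hw1 : vnorm w = 1 := by rw [hw, vnorm_mulVec_isometry Vm hVm u, hu1]
  have hwsig : vnorm ((Ppoly M C K zV).mulVec w) = sigmaMin (Ppoly M C K zV) := by
    rw [hw, Matrix.mulVec_mulVec, humin, hsig_eq]
  have hwspan : w ∈ colSpan Vm := by
    have hwsum : w = ∑ j, u j • (fun i => Vm i j) := by
      funext i
      simp [hw, Matrix.mulVec, dotProduct, Finset.sum_apply, mul_comm]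
    rw [hwsum]
    exact Submodule.sum_mem _ fun j _ => Submodule.smul_mem _ _
      (Submodule.subset_span ⟨j, rfl⟩)
  have hw0 : w ≠ 0 := by
    intro h
    rw [h] at hw1
    simp [vnorm] at hw1
  exact ⟨zV, hzVLam, hzVre, w, hwspan, hw0, w, 1, hw1, hwsig, (one_smul ℂ w).symm⟩
end

section
/- Singular value interpolation of the subspace framework: let P(λ; ν) be a quadratic matrix polynomial, z a complex number, and suppose the subspace V contains a right singular vector v corresponding to σ = σ_min(P(z; ν)). If u is the corresponding consistent unit left singular vector (P(z;ν)v = σu and u*P(z;ν) = σv*), and v = V_mat a for a unit vector a, then u and a are consistent unit left and right singular vectors of P(z;ν)V_mat corresponding to its smallest singular value, which equals σ. -/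
open Matrix Complex

lemma vnorm_nonneg' {ι : Type*} [Fintype ι] (x : ι → ℂ) : 0 ≤ vnorm x :=
  Real.sqrt_nonneg _

lemma vnorm_smul' {ι : Type*} [Fintype ι] (c : ℂ) (x : ι → ℂ) :
    vnorm (c • x) = ‖c‖ * vnorm x := by
  unfold vnorm
  simp only [Pi.smul_apply, smul_eq_mul, norm_mul, mul_pow]
  rw [← Finset.mul_sum, Real.sqrt_mul (sq_nonneg _), Real.sqrt_sq (norm_nonneg c)]

lemma vnorm_eq_sqrt_re {ι : Type*} [Fintype ι] (x : ι → ℂ) :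
    vnorm x = Real.sqrt (star x ⬝ᵥ x).re := by
  unfold vnorm
  congr 1
  simp only [dotProduct, Complex.re_sum, Pi.star_apply]
  congr 1 with i
  simp [Complex.sq_norm, Complex.normSq_apply, Complex.mul_re]

lemma vnorm_isometry {n r : ℕ} (Vm : Matrix (Fin n) (Fin r) ℂ)
    (hVm : Vmᴴ * Vm = 1) (w : Fin r → ℂ) :
    vnorm (Vm.mulVec w) = vnorm w := by
  rw [vnorm_eq_sqrt_re, vnorm_eq_sqrt_re]
  congr 2
  rw [Matrix.star_mulVec, Matrix.dotProduct_mulVec, Matrix.vecMul_vecMul, hVm,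
    Matrix.vecMul_one]

/-- if `(u, v)` is a consistent unit singular pair of `A = P(z;ν)` for
`σ = σ_min(A)` and `v = Vm a` with `a` a unit vector and `Vm` having orthonormal
columns, then `(u, a)` is a consistent unit singular pair of `A·Vm` for its smallest
singular value, which equals `σ`. -/
theorem consistent_pair_restriction
    {n r : ℕ} (hr : 0 < r)
    (A : Matrix (Fin n) (Fin n) ℂ)
    (Vm : Matrix (Fin n) (Fin r) ℂ) (hVm : Vmᴴ * Vm = 1)
    (σ : ℝ) (u v : Fin n → ℂ) (a : Fin r → ℂ)
    (hu : vnorm u = 1) (hv : vnorm v = 1) (ha : vnorm a = 1)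
    (hva : v = Vm.mulVec a)
    (hright : A.mulVec v = (σ : ℂ) • u)
    (hleft : Aᴴ.mulVec u = (σ : ℂ) • v)
    (hσ : σ = sigmaMin A) :
    (A * Vm).mulVec a = (σ : ℂ) • u ∧
      (A * Vm)ᴴ.mulVec u = (σ : ℂ) • a ∧
      sigmaMin (A * Vm) = σ := by
  have hσ0 : 0 ≤ σ := by
    rw [hσ]
    unfold sigmaMin
    apply le_csInf
    · exact ⟨vnorm (A.mulVec v), v, hv, rfl⟩
    · rintro t ⟨x, hx, rfl⟩
      exact vnorm_nonneg' _
  have h1 : (A * Vm).mulVec a = (σ : ℂ) • u := by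
    rw [← Matrix.mulVec_mulVec, ← hva, hright]
  have h2 : (A * Vm)ᴴ.mulVec u = (σ : ℂ) • a := by
    rw [Matrix.conjTranspose_mul, ← Matrix.mulVec_mulVec, hleft, Matrix.mulVec_smul,
      hva, Matrix.mulVec_mulVec, hVm, Matrix.one_mulVec]
  refine ⟨h1, h2, ?_⟩
  have hval : vnorm ((A * Vm).mulVec a) = σ := by
    rw [h1, vnorm_smul', hu, mul_one, Complex.norm_real, Real.norm_eq_abs, _root_.abs_of_nonneg hσ0]
  have hbdd : BddBelow {t : ℝ | ∃ w : Fin r → ℂ, vnorm w = 1 ∧ t = vnorm ((A * Vm).mulVec w)} := by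
    refine ⟨0, ?_⟩
    rintro t ⟨w, hw, rfl⟩
    exact vnorm_nonneg' _
  unfold sigmaMin
  apply le_antisymm
  · exact csInf_le hbdd ⟨a, ha, hval.symm⟩
  · apply le_csInf
    · exact ⟨σ, a, ha, hval.symm⟩
    rintro t ⟨w, hw, rfl⟩
    rw [← Matrix.mulVec_mulVec, hσ]
    unfold sigmaMin
    have hbddA : BddBelow {t : ℝ | ∃ x : Fin n → ℂ, vnorm x = 1 ∧ t = vnorm (A.mulVec x)} := by
      refine ⟨0, ?_⟩
      rintro t ⟨x, hx, rfl⟩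
      exact vnorm_nonneg' _
    exact csInf_le hbddA ⟨Vm.mulVec w, by rw [vnorm_isometry Vm hVm, hw], rfl⟩
end
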